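/- Let k be an algebraically closed field of characteristic zero, A a finite abelian group, and γ : Â × Â → kˣ a 2-cocycle, i.e. γ(χ,ξ)·γ(χξ,ζ) = γ(ξ,ζ)·γ(χ,ξζ) for all χ, ξ, ζ ∈ Â. For χ ∈ Â let e_χ = |A|⁻¹·Σ_{a∈A} χ(a)⁻¹·a ∈ k[A], and set F_γ = Σ_{χ,ξ∈Â} γ(χ,ξ)·(e_χ ⊗ e_ξ) ∈ k[A]⊗k[A]. Then F_γ is invertible with inverse F_{γ⁻¹} (where γ⁻¹(χ,ξ) = γ(χ,ξ)⁻¹), and F_γ satisfies the twist (dual 2-cocycle) equation (1⊗F_γ)·(id⊗Δ)(F_γ) = (F_γ⊗1)·(Δ⊗id)(F_γ) in k[A]⊗k[A]⊗k[A]. -/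

import Mathlib

open scoped TensorProduct

noncomputable section

variable (k G : Type*) [Field k] [Group G]

/-- The comultiplication `Δ(g) = g ⊗ g` of the group algebra `k[G]`, as an algebra map. -/
def gComul : MonoidAlgebra k G →ₐ[k] MonoidAlgebra k G ⊗[k] MonoidAlgebra k G :=
  MonoidAlgebra.lift k _ G
    { toFun := fun g => MonoidAlgebra.of k G g ⊗ₜ[k] MonoidAlgebra.of k G g
      map_one' := by rw [Algebra.TensorProduct.one_def]; simp [MonoidAlgebra.one_def]
      map_mul' := fun g h => by simp [Algebra.TensorProduct.tmul_mul_tmul] }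

/-- The flip of the tensor square of the group algebra. -/
abbrev gτ : MonoidAlgebra k G ⊗[k] MonoidAlgebra k G →ₐ[k]
    MonoidAlgebra k G ⊗[k] MonoidAlgebra k G :=
  (Algebra.TensorProduct.comm k (MonoidAlgebra k G) (MonoidAlgebra k G)).toAlgHom

/-- `x ⊗ y ↦ x ⊗ y ⊗ 1`. -/
abbrev gι₁₂ : MonoidAlgebra k G ⊗[k] MonoidAlgebra k G →ₐ[k]
    MonoidAlgebra k G ⊗[k] (MonoidAlgebra k G ⊗[k] MonoidAlgebra k G) :=
  Algebra.TensorProduct.map (AlgHom.id k _) Algebra.TensorProduct.includeLeft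

/-- `x ⊗ y ↦ x ⊗ 1 ⊗ y`. -/
abbrev gι₁₃ : MonoidAlgebra k G ⊗[k] MonoidAlgebra k G →ₐ[k]
    MonoidAlgebra k G ⊗[k] (MonoidAlgebra k G ⊗[k] MonoidAlgebra k G) :=
  Algebra.TensorProduct.map (AlgHom.id k _) Algebra.TensorProduct.includeRight

/-- `x ⊗ y ↦ 1 ⊗ x ⊗ y`. -/
abbrev gι₂₃ : MonoidAlgebra k G ⊗[k] MonoidAlgebra k G →ₐ[k]
    MonoidAlgebra k G ⊗[k] (MonoidAlgebra k G ⊗[k] MonoidAlgebra k G) :=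
  Algebra.TensorProduct.includeRight

/-- `id ⊗ Δ`. -/
abbrev gidΔ : MonoidAlgebra k G ⊗[k] MonoidAlgebra k G →ₐ[k]
    MonoidAlgebra k G ⊗[k] (MonoidAlgebra k G ⊗[k] MonoidAlgebra k G) :=
  Algebra.TensorProduct.map (AlgHom.id k _) (gComul k G)

/-- `Δ ⊗ id`, re-associated. -/
abbrev gΔid : MonoidAlgebra k G ⊗[k] MonoidAlgebra k G →ₐ[k]
    MonoidAlgebra k G ⊗[k] (MonoidAlgebra k G ⊗[k] MonoidAlgebra k G) :=
  (Algebra.TensorProduct.assoc k k k _ _ _).toAlgHom.comp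
    (Algebra.TensorProduct.map (gComul k G) (AlgHom.id k _))

/-- `R` is a universal R-matrix (quasitriangular structure) on the group algebra `k[G]`. -/
def IsGroupRMatrix (R : MonoidAlgebra k G ⊗[k] MonoidAlgebra k G) : Prop :=
  IsUnit R ∧
  (∀ h : MonoidAlgebra k G, R * gτ k G (gComul k G h) = gComul k G h * R) ∧
  gidΔ k G R = gι₁₃ k G R * gι₁₂ k G R ∧
  gΔid k G R = gι₁₃ k G R * gι₂₃ k G R


/-- The idempotent `e_χ = |A|⁻¹ Σ_{a∈A} χ(a)⁻¹ · a` of the group algebra `k[A]`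
associated to a character `χ ∈ Â`. -/
def charIdem {k A : Type*} [Field k] [CommGroup A] [Fintype A] (χ : A →* kˣ) :
    MonoidAlgebra k A :=
  (Fintype.card A : k)⁻¹ • ∑ a : A, (((χ a)⁻¹ : kˣ) : k) • MonoidAlgebra.of k A a

/-- The dual twist `F_γ = Σ_{χ,ξ∈Â} γ(χ,ξ) e_χ ⊗ e_ξ ∈ k[A] ⊗ k[A]` associated to a
function `γ : Â × Â → kˣ`. -/
def dualTwist {k A : Type*} [Field k] [CommGroup A] [Fintype A]
    (γ : (A →* kˣ) → (A →* kˣ) → kˣ) : MonoidAlgebra k A ⊗[k] MonoidAlgebra k A :=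
  ∑ᶠ χ : A →* kˣ, ∑ᶠ ξ : A →* kˣ, ((γ χ ξ : k)) • (charIdem χ ⊗ₜ[k] charIdem ξ)

section Aux

open scoped Classical

variable {k A : Type*} [Field k] [CommGroup A] [Fintype A]

/-- Sum of a nontrivial multiplicative function over a finite group vanishes. -/
lemma sum_hom_eq_zero {G : Type*} [Group G] [Fintype G] {f : G → k}
    (hmul : ∀ a b, f (a * b) = f a * f b) (h : ∃ b, f b ≠ 1) :
    ∑ a : G, f a = 0 := by
  obtain ⟨b, hb⟩ := h
  have key : f b * ∑ a : G, f a = ∑ a : G, f a := by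
    rw [Finset.mul_sum]
    simp_rw [← hmul]
    exact Fintype.sum_equiv (Equiv.mulLeft b) _ _ (fun a => rfl)
  have h0 : (f b - 1) * ∑ a : G, f a = 0 := by
    rw [sub_mul, one_mul, key, sub_self]
  rcases mul_eq_zero.mp h0 with h1 | h2
  · exact absurd (sub_eq_zero.mp h1) hb
  · exact h2

lemma char_ne_one {G : Type*} [Group G] {χ : G →* kˣ} (h : χ ≠ 1) :
    ∃ b, ((χ b : k)) ≠ 1 := by
  by_contra hc
  push_neg at hc
  exact h (MonoidHom.ext fun a => Units.ext (hc a))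

lemma sum_char₁ (χ : A →* kˣ) :
    ∑ a : A, ((χ a : k)) = if χ = 1 then (Fintype.card A : k) else 0 := by
  split_ifs with h
  · subst h; simp
  · exact sum_hom_eq_zero (by simp [map_mul]) (char_ne_one h)

variable [Fintype (A →* kˣ)]

lemma sum_char₂ (hsep : ∀ a : A, a ≠ 1 → ∃ φ : A →* kˣ, φ a ≠ 1)
    (hcard : Fintype.card (A →* kˣ) = Fintype.card A) (a : A) :
    ∑ χ : A →* kˣ, ((χ a : k)) = if a = 1 then (Fintype.card A : k) else 0 := by
  split_ifs with h
  · subst h; simp [hcard]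
  · refine sum_hom_eq_zero (by intro χ ξ; simp [MonoidHom.mul_apply]) ?_
    obtain ⟨φ, hφ⟩ := hsep a h
    exact ⟨φ, fun H => hφ (Units.ext H)⟩

end Aux

section Aux2

open scoped Classical

variable {k A : Type*} [Field k] [CommGroup A] [Fintype A]

open MonoidAlgebra in
lemma charIdem_eq (χ : A →* kˣ) :
    charIdem (k := k) χ =
      (Fintype.card A : k)⁻¹ • ∑ a : A, (((χ a)⁻¹ : kˣ) : k) • single a (1 : k) := by
  simp [charIdem, MonoidAlgebra.of_apply]

open MonoidAlgebra in
/-- Orthogonality of the idempotents `e_χ`. -/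
lemma charIdem_mul_charIdem [CharZero k] (χ ξ : A →* kˣ) :
    charIdem (k := k) χ * charIdem ξ = if χ = ξ then charIdem χ else 0 := by
  have hc : (Fintype.card A : k) ≠ 0 := Nat.cast_ne_zero.mpr Fintype.card_ne_zero
  rw [charIdem_eq, charIdem_eq]
  rw [smul_mul_assoc, mul_smul_comm, smul_smul, Finset.sum_mul_sum]
  have step1 : ∀ a : A, ∑ b : A, ((((χ a)⁻¹ : kˣ) : k) • single a (1:k)) *
      ((((ξ b)⁻¹ : kˣ) : k) • single b (1:k)) =
      ∑ c : A, ((((χ a)⁻¹ : kˣ) : k) * (((ξ (a⁻¹ * c))⁻¹ : kˣ) : k)) • single c (1:k) := by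
    intro a
    refine Fintype.sum_equiv (Equiv.mulLeft a) _ _ (fun b => ?_)
    rw [smul_mul_smul_comm, single_mul_single, one_mul]
    simp [Equiv.mulLeft]
  simp_rw [step1]
  rw [Finset.sum_comm]
  have step2 : ∀ c : A, ∑ a : A,
      ((((χ a)⁻¹ : kˣ) : k) * (((ξ (a⁻¹ * c))⁻¹ : kˣ) : k)) • single c (1:k) =
      ((if χ = ξ then (Fintype.card A : k) else 0) * (((ξ c)⁻¹ : kˣ) : k)) • single c (1:k) := by
    intro c
    rw [← Finset.sum_smul]
    congr 1
    have : ∀ a : A, (((χ a)⁻¹ : kˣ) : k) * (((ξ (a⁻¹ * c))⁻¹ : kˣ) : k) =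
        (((χ⁻¹ * ξ) a : kˣ) : k) * (((ξ c)⁻¹ : kˣ) : k) := by
      intro a
      simp only [MonoidHom.mul_apply, MonoidHom.inv_apply, map_mul, map_inv, mul_inv_rev, inv_inv]
      push_cast
      ring
    simp_rw [this]
    rw [← Finset.sum_mul]
    congr 1
    rw [sum_char₁]
    by_cases hh : χ = ξ
    · rw [if_pos (by rw [hh]; exact inv_mul_cancel ξ), if_pos hh]
    · rw [if_neg (fun H => hh (inv_mul_eq_one.mp H)), if_neg hh]
  simp_rw [step2]
  split_ifs with h
  · subst h
    rw [Finset.smul_sum, Finset.smul_sum]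
    refine Finset.sum_congr rfl fun c _ => ?_
    rw [smul_smul, smul_smul]
    congr 1
    field_simp
  · simp

end Aux2

section Aux3

open scoped Classical

variable {k A : Type*} [Field k] [CharZero k] [CommGroup A] [Fintype A]
  [Fintype (A →* kˣ)]

open MonoidAlgebra in
lemma sum_charIdem (hsep : ∀ a : A, a ≠ 1 → ∃ φ : A →* kˣ, φ a ≠ 1)
    (hcard : Fintype.card (A →* kˣ) = Fintype.card A) :
    ∑ χ : A →* kˣ, charIdem (k := k) χ = 1 := by
  have hc : (Fintype.card A : k) ≠ 0 := Nat.cast_ne_zero.mpr Fintype.card_ne_zero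
  simp_rw [charIdem_eq]
  rw [← Finset.smul_sum, Finset.sum_comm]
  have key : ∀ a : A, ∑ χ : A →* kˣ, (((χ a)⁻¹ : kˣ) : k) • single a (1:k)
      = (if a = 1 then (Fintype.card A : k) else 0) • single a (1:k) := by
    intro a
    rw [← Finset.sum_smul]
    congr 1
    have h1 : ∀ χ : A →* kˣ, (((χ a)⁻¹ : kˣ) : k) = ((χ a⁻¹ : kˣ) : k) := by
      intro χ; rw [map_inv]
    simp_rw [h1]
    rw [sum_char₂ hsep hcard]
    by_cases h : a = 1
    · rw [if_pos (by rw [h]; exact inv_one), if_pos h]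
    · rw [if_neg (fun H => h (inv_eq_one.mp H)), if_neg h]
  simp_rw [key, ite_smul, zero_smul, Finset.sum_ite_eq' Finset.univ (1 : A)]
  simp only [Finset.mem_univ, if_true]
  rw [smul_smul, inv_mul_cancel₀ hc, one_smul, MonoidAlgebra.one_def]

open MonoidAlgebra TensorProduct in
lemma gComul_charIdem (hsep : ∀ a : A, a ≠ 1 → ∃ φ : A →* kˣ, φ a ≠ 1)
    (hcard : Fintype.card (A →* kˣ) = Fintype.card A) (χ : A →* kˣ) :
    gComul k A (charIdem χ) = ∑ ξ : A →* kˣ, charIdem ξ ⊗ₜ[k] charIdem (ξ⁻¹ * χ) := by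
  have hc : (Fintype.card A : k) ≠ 0 := Nat.cast_ne_zero.mpr Fintype.card_ne_zero
  have lhs : gComul k A (charIdem χ) = (Fintype.card A : k)⁻¹ •
      ∑ a : A, (((χ a)⁻¹ : kˣ) : k) • (single a (1:k) ⊗ₜ[k] single a (1:k)) := by
    rw [charIdem_eq, map_smul, map_sum]
    congr 1
    refine Finset.sum_congr rfl fun a _ => ?_
    rw [map_smul]
    congr 1
    simp [gComul, MonoidAlgebra.of_apply, MonoidAlgebra.lift_single]
  have rhs : ∀ ξ : A →* kˣ, charIdem (k := k) ξ ⊗ₜ[k] charIdem (ξ⁻¹ * χ) =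
      ((Fintype.card A : k)⁻¹ * (Fintype.card A : k)⁻¹) •
        ∑ a : A, ∑ b : A, ((((ξ a)⁻¹ : kˣ) : k) * ((((ξ⁻¹ * χ) b)⁻¹ : kˣ) : k)) •
          (single a (1:k) ⊗ₜ[k] single b (1:k)) := by
    intro ξ
    rw [charIdem_eq, charIdem_eq, ← TensorProduct.smul_tmul', TensorProduct.tmul_smul, smul_smul]
    congr 1
    rw [sum_tmul]
    refine Finset.sum_congr rfl fun a _ => ?_
    rw [tmul_sum]
    refine Finset.sum_congr rfl fun b _ => ?_
    rw [← TensorProduct.smul_tmul', TensorProduct.tmul_smul, smul_smul]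
  rw [lhs]
  simp_rw [rhs]
  rw [← Finset.smul_sum]
  have swap : (∑ ξ : A →* kˣ, ∑ a : A, ∑ b : A,
        ((((ξ a)⁻¹ : kˣ) : k) * ((((ξ⁻¹ * χ) b)⁻¹ : kˣ) : k)) •
          (single a (1:k) ⊗ₜ[k] single b (1:k)))
      = ∑ a : A, ∑ b : A, (∑ ξ : A →* kˣ,
        (((ξ a)⁻¹ : kˣ) : k) * ((((ξ⁻¹ * χ) b)⁻¹ : kˣ) : k)) •
          (single a (1:k) ⊗ₜ[k] single b (1:k)) := by
    rw [Finset.sum_comm]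
    refine Finset.sum_congr rfl fun a _ => ?_
    rw [Finset.sum_comm]
    refine Finset.sum_congr rfl fun b _ => ?_
    rw [← Finset.sum_smul]
  rw [swap]
  have inner : ∀ a b : A, (∑ ξ : A →* kˣ,
      (((ξ a)⁻¹ : kˣ) : k) * ((((ξ⁻¹ * χ) b)⁻¹ : kˣ) : k)) =
      (if a = b then (Fintype.card A : k) else 0) * (((χ b)⁻¹ : kˣ) : k) := by
    intro a b
    have h1 : ∀ ξ : A →* kˣ, (((ξ a)⁻¹ : kˣ) : k) * ((((ξ⁻¹ * χ) b)⁻¹ : kˣ) : k) =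
        ((ξ (a⁻¹ * b) : kˣ) : k) * (((χ b)⁻¹ : kˣ) : k) := by
      intro ξ
      simp only [MonoidHom.mul_apply, MonoidHom.inv_apply, map_mul, map_inv, mul_inv_rev, inv_inv]
      push_cast
      ring
    simp_rw [h1]
    rw [← Finset.sum_mul, sum_char₂ hsep hcard]
    congr 1
    by_cases h : a = b
    · rw [if_pos (by rw [h]; exact inv_mul_cancel b), if_pos h]
    · rw [if_neg (fun H => h (inv_mul_eq_one.mp H)), if_neg h]
  simp_rw [inner]
  have collapse : ∀ a : A, ∑ b : A,
      ((if a = b then (Fintype.card A : k) else 0) * (((χ b)⁻¹ : kˣ) : k)) •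
        (single a (1:k) ⊗ₜ[k] single b (1:k)) =
      ((Fintype.card A : k) * (((χ a)⁻¹ : kˣ) : k)) •
        (single a (1:k) ⊗ₜ[k] single a (1:k)) := by
    intro a
    simp_rw [ite_mul, zero_mul, ite_smul, zero_smul]
    rw [Finset.sum_ite_eq Finset.univ a]
    simp
  simp_rw [collapse]
  rw [Finset.smul_sum, Finset.smul_sum]
  refine Finset.sum_congr rfl fun a _ => ?_
  rw [smul_smul, smul_smul]
  congr 1
  field_simp

end Aux3

section Aux4

open scoped Classical

variable (k A : Type*) [Field k] [CharZero k] [CommGroup A] [Fintype A]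
  [Fintype (A →* kˣ)]

/-- Basis idempotents of `k[A] ⊗ k[A]`. -/
def E2 (p : (A →* kˣ) × (A →* kˣ)) : MonoidAlgebra k A ⊗[k] MonoidAlgebra k A :=
  charIdem p.1 ⊗ₜ[k] charIdem p.2

/-- Basis idempotents of `k[A] ⊗ (k[A] ⊗ k[A])`. -/
def E3 (u : (A →* kˣ) × (A →* kˣ) × (A →* kˣ)) :
    MonoidAlgebra k A ⊗[k] (MonoidAlgebra k A ⊗[k] MonoidAlgebra k A) :=
  charIdem u.1 ⊗ₜ[k] (charIdem u.2.1 ⊗ₜ[k] charIdem u.2.2)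

variable {k A}

lemma E2_mul (p q : (A →* kˣ) × (A →* kˣ)) :
    E2 k A p * E2 k A q = if p = q then E2 k A p else 0 := by
  rcases p with ⟨χ, ξ⟩; rcases q with ⟨χ', ξ'⟩
  simp only [E2, Algebra.TensorProduct.tmul_mul_tmul, charIdem_mul_charIdem]
  by_cases h1 : χ = χ' <;> by_cases h2 : ξ = ξ' <;>
    simp [h1, h2, Prod.ext_iff, TensorProduct.tmul_zero, TensorProduct.zero_tmul]

lemma E3_mul (u v : (A →* kˣ) × (A →* kˣ) × (A →* kˣ)) :
    E3 k A u * E3 k A v = if u = v then E3 k A u else 0 := by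
  rcases u with ⟨χ, ξ, ζ⟩; rcases v with ⟨χ', ξ', ζ'⟩
  simp only [E3, Algebra.TensorProduct.tmul_mul_tmul, charIdem_mul_charIdem]
  by_cases h1 : χ = χ' <;> by_cases h2 : ξ = ξ' <;> by_cases h3 : ζ = ζ' <;>
    simp [h1, h2, h3, Prod.ext_iff, TensorProduct.tmul_zero, TensorProduct.zero_tmul]

lemma sum_E2 (hsep : ∀ a : A, a ≠ 1 → ∃ φ : A →* kˣ, φ a ≠ 1)
    (hcard : Fintype.card (A →* kˣ) = Fintype.card A) :
    ∑ p : (A →* kˣ) × (A →* kˣ), E2 k A p = 1 := by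
  rw [Fintype.sum_prod_type]
  simp only [E2]
  have : ∀ χ : A →* kˣ, ∑ ξ : A →* kˣ, charIdem (k := k) χ ⊗ₜ[k] charIdem ξ =
      charIdem χ ⊗ₜ[k] (1 : MonoidAlgebra k A) := by
    intro χ
    rw [← TensorProduct.tmul_sum, sum_charIdem hsep hcard]
  simp_rw [this]
  rw [← TensorProduct.sum_tmul, sum_charIdem hsep hcard, Algebra.TensorProduct.one_def]

lemma sum_smul_mul {R ι : Type*} [Ring R] [Module k R] [IsScalarTower k R R]
    [SMulCommClass k R R] [Fintype ι] [DecidableEq ι] (E : ι → R)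
    (hE : ∀ u v, E u * E v = if u = v then E u else 0) (f g : ι → k) :
    (∑ u, f u • E u) * (∑ v, g v • E v) = ∑ u, (f u * g u) • E u := by
  rw [Finset.sum_mul_sum]
  have key : ∀ u v, (f u • E u) * (g v • E v) = if u = v then (f u * g v) • E u else 0 := by
    intro u v
    rw [smul_mul_smul_comm, hE]
    split_ifs <;> simp
  simp_rw [key]
  refine Finset.sum_congr rfl fun u _ => ?_
  rw [Finset.sum_ite_eq Finset.univ u]
  simp

lemma dualTwist_repr (γ : (A →* kˣ) → (A →* kˣ) → kˣ) :
    dualTwist (k := k) γ = ∑ p : (A →* kˣ) × (A →* kˣ), ((γ p.1 p.2 : k)) • E2 k A p := by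
  rw [dualTwist, finsum_eq_sum_of_fintype, Fintype.sum_prod_type]
  exact Finset.sum_congr rfl fun χ _ => by rw [finsum_eq_sum_of_fintype]; rfl

lemma repr_helper (Φ : (MonoidAlgebra k A ⊗[k] MonoidAlgebra k A) →ₐ[k]
      (MonoidAlgebra k A ⊗[k] (MonoidAlgebra k A ⊗[k] MonoidAlgebra k A)))
    (γ : (A →* kˣ) → (A →* kˣ) → kˣ)
    (e : ((A →* kˣ) × (A →* kˣ)) → (A →* kˣ) → (A →* kˣ) × (A →* kˣ) × (A →* kˣ))
    (hΦ : ∀ p, Φ (E2 k A p) = ∑ η : A →* kˣ, E3 k A (e p η)) :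
    Φ (dualTwist γ) = ∑ pt : ((A →* kˣ) × (A →* kˣ)) × (A →* kˣ),
      ((γ pt.1.1 pt.1.2 : k)) • E3 k A (e pt.1 pt.2) := by
  rw [dualTwist_repr, map_sum]
  conv_rhs => rw [Fintype.sum_prod_type]
  refine Finset.sum_congr rfl fun p _ => ?_
  have hsmul : ∀ (c : k) x, Φ (c • x) = c • Φ x := fun c x =>
    Φ.toLinearMap.map_smul c x
  rw [hsmul, hΦ, Finset.smul_sum]

end Aux4

section Aux5

open scoped Classical

variable {k A : Type*} [Field k] [CharZero k] [CommGroup A] [Fintype A]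
  [Fintype (A →* kˣ)]
  (hsep : ∀ a : A, a ≠ 1 → ∃ φ : A →* kˣ, φ a ≠ 1)
  (hcard : Fintype.card (A →* kˣ) = Fintype.card A)

include hsep hcard

lemma repr23 (γ : (A →* kˣ) → (A →* kˣ) → kˣ) :
    gι₂₃ k A (dualTwist γ) = ∑ u : (A →* kˣ) × (A →* kˣ) × (A →* kˣ),
      ((γ u.2.1 u.2.2 : k)) • E3 k A u := by
  have h : ∀ p, gι₂₃ k A (E2 k A p) = ∑ η : A →* kˣ, E3 k A (η, p) := by
    intro p
    show Algebra.TensorProduct.includeRight (E2 k A p) = _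
    rw [Algebra.TensorProduct.includeRight_apply, ← sum_charIdem hsep hcard,
      TensorProduct.sum_tmul]
    rfl
  rw [repr_helper _ γ (fun p η => (η, p)) h]
  exact (Fintype.sum_equiv
    (Equiv.mk (fun u : (A →* kˣ) × (A →* kˣ) × (A →* kˣ) => ((u.2.1, u.2.2), u.1))
      (fun pt => (pt.2, pt.1.1, pt.1.2)) (fun u => rfl) (fun pt => rfl))
    _ _ (fun u => rfl)).symm

lemma repr12 (γ : (A →* kˣ) → (A →* kˣ) → kˣ) :
    gι₁₂ k A (dualTwist γ) = ∑ u : (A →* kˣ) × (A →* kˣ) × (A →* kˣ),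
      ((γ u.1 u.2.1 : k)) • E3 k A u := by
  have h : ∀ p, gι₁₂ k A (E2 k A p) = ∑ ζ : A →* kˣ, E3 k A (p.1, p.2, ζ) := by
    intro p
    show Algebra.TensorProduct.map (AlgHom.id k _) Algebra.TensorProduct.includeLeft
      (charIdem p.1 ⊗ₜ[k] charIdem p.2) = _
    rw [Algebra.TensorProduct.map_tmul, AlgHom.id_apply,
      Algebra.TensorProduct.includeLeft_apply, ← sum_charIdem hsep hcard,
      TensorProduct.tmul_sum, TensorProduct.tmul_sum]
    rfl
  rw [repr_helper _ γ (fun p ζ => (p.1, p.2, ζ)) h]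
  exact (Fintype.sum_equiv
    (Equiv.mk (fun u : (A →* kˣ) × (A →* kˣ) × (A →* kˣ) => ((u.1, u.2.1), u.2.2))
      (fun pt => (pt.1.1, pt.1.2, pt.2)) (fun u => rfl) (fun pt => rfl))
    _ _ (fun u => rfl)).symm

lemma reprIdComul (γ : (A →* kˣ) → (A →* kˣ) → kˣ) :
    gidΔ k A (dualTwist γ) = ∑ u : (A →* kˣ) × (A →* kˣ) × (A →* kˣ),
      ((γ u.1 (u.2.1 * u.2.2) : k)) • E3 k A u := by
  have h : ∀ p, gidΔ k A (E2 k A p) = ∑ η : A →* kˣ, E3 k A (p.1, η, η⁻¹ * p.2) := by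
    intro p
    show Algebra.TensorProduct.map (AlgHom.id k _) (gComul k A)
      (charIdem p.1 ⊗ₜ[k] charIdem p.2) = _
    rw [Algebra.TensorProduct.map_tmul, AlgHom.id_apply, gComul_charIdem hsep hcard,
      TensorProduct.tmul_sum]
    rfl
  rw [repr_helper _ γ (fun p η => (p.1, η, η⁻¹ * p.2)) h]
  refine (Fintype.sum_equiv
    (Equiv.mk (fun u : (A →* kˣ) × (A →* kˣ) × (A →* kˣ) => ((u.1, u.2.1 * u.2.2), u.2.1))
      (fun pt => (pt.1.1, pt.2, pt.2⁻¹ * pt.1.2))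
      (fun u => by obtain ⟨a, b, c⟩ := u; rw [Prod.ext_iff, Prod.ext_iff]
                   exact ⟨rfl, rfl, inv_mul_cancel_left b c⟩)
      (fun pt => by obtain ⟨⟨a, b⟩, c⟩ := pt; rw [Prod.ext_iff, Prod.ext_iff]
                    exact ⟨⟨rfl, mul_inv_cancel_left c b⟩, rfl⟩))
    _ _ (fun u => by
      obtain ⟨a, b, c⟩ := u
      simp only [Equiv.coe_fn_mk]
      rw [inv_mul_cancel_left b c])).symm

lemma reprComulId (γ : (A →* kˣ) → (A →* kˣ) → kˣ) :
    gΔid k A (dualTwist γ) = ∑ u : (A →* kˣ) × (A →* kˣ) × (A →* kˣ),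
      ((γ (u.1 * u.2.1) u.2.2 : k)) • E3 k A u := by
  have h : ∀ p, gΔid k A (E2 k A p) = ∑ η : A →* kˣ, E3 k A (η, η⁻¹ * p.1, p.2) := by
    intro p
    show (Algebra.TensorProduct.assoc k k k _ _ _).toAlgHom
      (Algebra.TensorProduct.map (gComul k A) (AlgHom.id k _)
        (charIdem p.1 ⊗ₜ[k] charIdem p.2)) = _
    rw [Algebra.TensorProduct.map_tmul, AlgHom.id_apply, gComul_charIdem hsep hcard,
      TensorProduct.sum_tmul, map_sum]
    refine Finset.sum_congr rfl fun η _ => ?_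
    simp [Algebra.TensorProduct.assoc_tmul]
    rfl
  rw [repr_helper _ γ (fun p η => (η, η⁻¹ * p.1, p.2)) h]
  refine (Fintype.sum_equiv
    (Equiv.mk (fun u : (A →* kˣ) × (A →* kˣ) × (A →* kˣ) => ((u.1 * u.2.1, u.2.2), u.1))
      (fun pt => (pt.2, pt.2⁻¹ * pt.1.1, pt.1.2))
      (fun u => by obtain ⟨a, b, c⟩ := u; rw [Prod.ext_iff, Prod.ext_iff]
                   exact ⟨rfl, inv_mul_cancel_left a b, rfl⟩)
      (fun pt => by obtain ⟨⟨a, b⟩, c⟩ := pt; rw [Prod.ext_iff, Prod.ext_iff]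
                    exact ⟨⟨mul_inv_cancel_left c a, rfl⟩, rfl⟩))
    _ _ (fun u => by
      obtain ⟨a, b, c⟩ := u
      simp only [Equiv.coe_fn_mk]
      rw [inv_mul_cancel_left a b])).symm

end Aux5

/-- For a 2-cocycle `γ` on the character group `Â` of a finite abelian group `A` over an
algebraically closed field of characteristic zero, the element `F_γ` is invertible with
inverse `F_{γ⁻¹}`, and satisfies the twist (dual 2-cocycle) equation
`(1⊗F_γ)·(id⊗Δ)(F_γ) = (F_γ⊗1)·(Δ⊗id)(F_γ)`. -/
theorem dualTwist_cocycle {k A : Type*} [Field k] [IsAlgClosed k] [CharZero k]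
    [CommGroup A] [Fintype A] (γ : (A →* kˣ) → (A →* kˣ) → kˣ)
    (hγ : ∀ χ ξ ζ : A →* kˣ, γ χ ξ * γ (χ * ξ) ζ = γ ξ ζ * γ χ (ξ * ζ)) :
    dualTwist γ * dualTwist (fun χ ξ => (γ χ ξ)⁻¹) = 1 ∧
    dualTwist (fun χ ξ => (γ χ ξ)⁻¹) * dualTwist γ = 1 ∧
    gι₂₃ k A (dualTwist γ) * gidΔ k A (dualTwist γ) =
      gι₁₂ k A (dualTwist γ) * gΔid k A (dualTwist γ) := by
  classical
  haveI : NeZero ((Monoid.exponent A : k)) :=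
    ⟨Nat.cast_ne_zero.mpr (Monoid.exponent_ne_zero_of_finite)⟩
  obtain ⟨e⟩ := CommGroup.monoidHom_mulEquiv_of_hasEnoughRootsOfUnity A k
  haveI : Fintype (A →* kˣ) := Fintype.ofEquiv A e.toEquiv.symm
  have hcard : Fintype.card (A →* kˣ) = Fintype.card A := Fintype.card_congr e.toEquiv
  have hsep : ∀ a : A, a ≠ 1 → ∃ φ : A →* kˣ, φ a ≠ 1 := fun a ha =>
    CommGroup.exists_apply_ne_one_of_hasEnoughRootsOfUnity A k ha
  refine ⟨?_, ?_, ?_⟩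
  · rw [dualTwist_repr, dualTwist_repr]
    refine (sum_smul_mul (E2 k A) E2_mul _ _).trans ?_
    refine Eq.trans (Finset.sum_congr rfl fun p _ => ?_) (sum_E2 hsep hcard)
    rw [← Units.val_mul, mul_inv_cancel (γ p.1 p.2), Units.val_one, one_smul]
  · rw [dualTwist_repr, dualTwist_repr]
    refine (sum_smul_mul (E2 k A) E2_mul _ _).trans ?_
    refine Eq.trans (Finset.sum_congr rfl fun p _ => ?_) (sum_E2 hsep hcard)
    rw [← Units.val_mul, inv_mul_cancel (γ p.1 p.2), Units.val_one, one_smul]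
  · rw [repr23 hsep hcard, reprIdComul hsep hcard, repr12 hsep hcard, reprComulId hsep hcard]
    refine ((sum_smul_mul (E3 k A) E3_mul _ _).trans ?_).trans
      (sum_smul_mul (E3 k A) E3_mul _ _).symm
    refine Finset.sum_congr rfl fun u _ => ?_
    congr 1
    rw [← Units.val_mul, ← Units.val_mul]
    exact congrArg Units.val (hγ u.1 u.2.1 u.2.2).symm


end
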